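/- Let f(x) = a_n x^n + ... + a_0 ∈ ℤ[x] with a_0 ≠ 0 and |a_n| > |a_{n-1}| + ... + |a_0|. If there exists an integer m with |m| ≥ 2 such that |f(m)| is a prime number, then f is irreducible in ℤ[x]. -/

import Mathlib

open Polynomial Finset

lemma rootBound (n : ℕ) (a : ℕ → ℤ)
    (hdom : ∑ i ∈ Finset.range n, |a i| < |a n|)
    (z : ℂ) (hz : ∑ i ∈ Finset.range (n+1), (a i : ℂ) * z ^ i = 0) :
    ‖z‖ < 1 := by
  by_contra h
  push_neg at h
  have hz1 : (1:ℝ) ≤ ‖z‖ := h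
  have key : (a n : ℂ) * z ^ n = -∑ i ∈ Finset.range n, (a i : ℂ) * z ^ i := by
    rw [Finset.sum_range_succ] at hz
    linear_combination hz
  have habs : ∀ (w : ℂ) (i : ℕ), ‖(a i : ℂ) * w ^ i‖
      = (|a i| : ℝ) * ‖w‖ ^ i := by
    intro w i
    rw [norm_mul, norm_pow, Complex.norm_intCast]
    try norm_num [Int.cast_abs]
  have h1 : (|a n| : ℝ) * ‖z‖ ^ n
      ≤ ∑ i ∈ Finset.range n, (|a i| : ℝ) * ‖z‖ ^ i := by
    calc (|a n| : ℝ) * ‖z‖ ^ n = ‖(a n : ℂ) * z ^ n‖ := (habs z n).symm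
      _ = ‖∑ i ∈ Finset.range n, (a i : ℂ) * z ^ i‖ := by rw [key, norm_neg]
      _ ≤ ∑ i ∈ Finset.range n, ‖(a i : ℂ) * z ^ i‖ :=
          norm_sum_le _ _
      _ = ∑ i ∈ Finset.range n, (|a i| : ℝ) * ‖z‖ ^ i := by
          exact Finset.sum_congr rfl fun i _ => habs z i
  have h2 : ∑ i ∈ Finset.range n, (|a i| : ℝ) * ‖z‖ ^ i
      ≤ (∑ i ∈ Finset.range n, (|a i| : ℝ)) * ‖z‖ ^ n := by
    rw [Finset.sum_mul]
    refine Finset.sum_le_sum fun i hi => ?_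
    have : ‖z‖ ^ i ≤ ‖z‖ ^ n :=
      pow_le_pow_right₀ hz1 (Finset.mem_range.mp hi).le
    have hnn : (0:ℝ) ≤ (|a i| : ℝ) := by positivity
    nlinarith
  have h3 : ((∑ i ∈ Finset.range n, |a i| : ℤ) : ℝ) < (|a n| : ℝ) := by exact_mod_cast hdom
  have hzn : (0:ℝ) < ‖z‖ ^ n := by positivity
  push_cast at h3
  nlinarith

lemma one_le_msprod (s : Multiset ℝ) (h : ∀ x ∈ s, 1 ≤ x) : 1 ≤ s.prod := by
  induction s using Multiset.induction with
  | empty => simp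
  | cons a t ih =>
    simp only [Multiset.prod_cons]
    have ha := h a (by simp)
    have ht := ih (fun x hx => h x (by simp [hx]))
    nlinarith

lemma one_lt_msprod (s : Multiset ℝ) (h : ∀ x ∈ s, 1 < x) (hs : s ≠ 0) : 1 < s.prod := by
  obtain ⟨x, hx⟩ := Multiset.exists_mem_of_ne_zero hs
  obtain ⟨t, rfl⟩ := Multiset.exists_cons_of_mem hx
  rw [Multiset.prod_cons]
  have hx1 := h x (by simp)
  have ht : 1 ≤ t.prod := one_le_msprod t (fun y hy => (h y (by simp [hy])).le)
  nlinarith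

lemma factorBound (n : ℕ) (a : ℕ → ℤ)
    (hdom : ∑ i ∈ Finset.range n, |a i| < |a n|)
    (m : ℤ) (hm : 2 ≤ |m|)
    (g : ℤ[X]) (hg : g ∣ ∑ i ∈ Finset.range (n + 1), C (a i) * X ^ i)
    (hdg : 1 ≤ g.natDegree) : 1 < |g.eval m| := by
  set F : ℤ[X] := ∑ i ∈ Finset.range (n + 1), C (a i) * X ^ i with hF
  have hginj : Function.Injective (Int.castRingHom ℂ) := Int.cast_injective
  have hg0 : g ≠ 0 := fun h => by simp [h] at hdg
  set G : ℂ[X] := g.map (Int.castRingHom ℂ) with hGdef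
  have hG0 : G ≠ 0 := (Polynomial.map_ne_zero_iff hginj).mpr hg0
  have hGdeg : G.natDegree = g.natDegree := Polynomial.natDegree_map_eq_of_injective hginj g
  -- every root of G has abs < 1
  have hroot : ∀ z ∈ G.roots, ‖(m:ℂ) - z‖ > 1 := by
    intro z hz
    have hzroot : G.eval z = 0 := (Polynomial.isRoot_of_mem_roots hz)
    have hdvd : G ∣ F.map (Int.castRingHom ℂ) := Polynomial.map_dvd _ hg
    have hFz : (F.map (Int.castRingHom ℂ)).eval z = 0 := by
      obtain ⟨q, hq⟩ := hdvd
      rw [hq, eval_mul, hzroot, zero_mul]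
    have hsum : ∑ i ∈ Finset.range (n+1), (a i : ℂ) * z ^ i = 0 := by
      rw [hF] at hFz
      simpa [Polynomial.map_sum, Polynomial.eval_finset_sum] using hFz
    have h1 := rootBound n a hdom z hsum
    have hmz : (2:ℝ) ≤ ‖(m:ℂ)‖ := by
      rw [Complex.norm_intCast]
      exact_mod_cast hm
    calc (1:ℝ) < ‖(m:ℂ)‖ - ‖z‖ := by linarith
      _ ≤ ‖(m:ℂ) - z‖ := norm_sub_norm_le (m:ℂ) z
  -- product formula
  have hsplit := (C_leadingCoeff_mul_prod_multiset_X_sub_C (Polynomial.splits_iff_card_roots.mp (IsAlgClosed.splits (k := ℂ) G))).symm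
  have heval : ‖G.eval (m:ℂ)‖
      = ‖G.leadingCoeff‖ * (G.roots.map fun z => ‖(m:ℂ) - z‖).prod := by
    conv_lhs => rw [hsplit]
    rw [eval_mul, eval_C, norm_mul, Polynomial.eval_multiset_prod]
    congr 1
    rw [show ∀ s : Multiset ℂ, ‖s.prod‖ = (s.map norm).prod from fun s => map_multiset_prod (normHom : ℂ →*₀ ℝ) s, Multiset.map_map, Multiset.map_map]
    congr 1
    apply Multiset.map_congr rfl
    intro z _
    simp
  have hcard : Multiset.card G.roots = G.natDegree :=
    (Polynomial.splits_iff_card_roots.mp (IsAlgClosed.splits G))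
  have hne : G.roots ≠ 0 := by
    intro h
    rw [h] at hcard
    simp [hGdeg] at hcard
    omega
  have hprod : 1 < (G.roots.map fun z => ‖(m:ℂ) - z‖).prod := by
    apply one_lt_msprod
    · intro x hx
      obtain ⟨z, hz, rfl⟩ := Multiset.mem_map.mp hx
      exact hroot z hz
    · simpa using hne
  have hlead : 1 ≤ ‖G.leadingCoeff‖ := by
    have : G.leadingCoeff ≠ 0 := Polynomial.leadingCoeff_ne_zero.mpr hG0
    have h2 : G.leadingCoeff = ((g.leadingCoeff : ℤ) : ℂ) := by
      rw [hGdef, Polynomial.leadingCoeff_map_of_leadingCoeff_ne_zero]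
      · rfl
      · simpa using Polynomial.leadingCoeff_ne_zero.mpr hg0
    rw [h2, Complex.norm_intCast]
    have : g.leadingCoeff ≠ 0 := Polynomial.leadingCoeff_ne_zero.mpr hg0
    have : 1 ≤ |g.leadingCoeff| := Int.one_le_abs this
    exact_mod_cast this
  have hGeval : ‖G.eval (m:ℂ)‖ = ((|g.eval m| : ℤ) : ℝ) := by
    have h5 := Polynomial.eval_intCast_map (Int.castRingHom ℂ) g m
    simp only [Int.cast_id] at h5
    rw [hGdef, h5]
    simp [Complex.norm_intCast]
  have final : (1:ℝ) < ((|g.eval m| : ℤ) : ℝ) := by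
    rw [← hGeval, heval]
    nlinarith
  exact_mod_cast final

theorem stmt_6 (n : ℕ) (a : ℕ → ℤ) (hn : 1 ≤ n) (h0 : a 0 ≠ 0)
    (hdom : ∑ i ∈ Finset.range n, |a i| < |a n|)
    (m : ℤ) (hm : 2 ≤ |m|)
    (hp : ((∑ i ∈ Finset.range (n + 1), Polynomial.C (a i) * Polynomial.X ^ i).eval m).natAbs.Prime) :
    Irreducible (∑ i ∈ Finset.range (n + 1), Polynomial.C (a i) * Polynomial.X ^ i) := by
  set F : ℤ[X] := ∑ i ∈ Finset.range (n + 1), C (a i) * X ^ i with hF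
  have hcoeff : F.coeff n = a n := by
    rw [hF, Polynomial.finset_sum_coeff]
    simp [Polynomial.coeff_C_mul, Polynomial.coeff_X_pow]
  have han : a n ≠ 0 := by
    intro h
    rw [h] at hdom
    have : (0:ℤ) ≤ ∑ i ∈ Finset.range n, |a i| := Finset.sum_nonneg fun i _ => abs_nonneg _
    simp at hdom
    omega
  have hF0 : F ≠ 0 := fun h => han (by rw [← hcoeff, h, Polynomial.coeff_zero])
  have hFdeg : F.natDegree = n := by
    apply le_antisymm
    · rw [hF]
      apply Polynomial.natDegree_sum_le_of_forall_le
      intro i hi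
      apply le_trans (Polynomial.natDegree_C_mul_le _ _)
      simp [Polynomial.natDegree_X_pow]
      have := Finset.mem_range.mp hi
      omega
    · exact Polynomial.le_natDegree_of_ne_zero (by rw [hcoeff]; exact han)
  -- bound lemma specialized
  have key : ∀ g : ℤ[X], g ∣ F → 1 ≤ g.natDegree → 2 ≤ (g.eval m).natAbs := by
    intro g hg hdg
    have h1 := factorBound n a hdom m hm g hg hdg
    rw [Int.abs_eq_natAbs] at h1
    exact_mod_cast h1
  have hp2 := hp.two_le
  constructor
  · intro hu
    have := Polynomial.natDegree_eq_zero_of_isUnit hu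
    omega
  · intro g h hEq
    have hg0 : g ≠ 0 := fun hh => hF0 (by rw [hEq, hh, zero_mul])
    have hh0 : h ≠ 0 := fun hh => hF0 (by rw [hEq, hh, mul_zero])
    have hdeg : g.natDegree + h.natDegree = n := by
      rw [← hFdeg, hEq, Polynomial.natDegree_mul hg0 hh0]
    have hev : (g.eval m).natAbs * (h.eval m).natAbs = (F.eval m).natAbs := by
      rw [← Int.natAbs_mul, ← Polynomial.eval_mul, ← hEq]
    have hgd : g ∣ F := ⟨h, hEq⟩
    have hhd : h ∣ F := ⟨g, by rw [hEq, mul_comm]⟩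
    rcases Nat.eq_zero_or_pos g.natDegree with hg1 | hg1
    · left
      have hgC : g = C (g.coeff 0) := Polynomial.eq_C_of_natDegree_eq_zero hg1
      have hhdeg : 1 ≤ h.natDegree := by omega
      have hB := key h hhd hhdeg
      have hA : (g.eval m).natAbs = 1 := by
        have hdvd : (h.eval m).natAbs ∣ (F.eval m).natAbs := ⟨(g.eval m).natAbs, by rw [← hev]; ring⟩
        rcases (hp.eq_one_or_self_of_dvd _ hdvd) with h1 | h1
        · omega
        · rw [h1] at hev
          have : 0 < (F.eval m).natAbs := by omega
          exact Nat.eq_of_mul_eq_mul_right this (hev.trans (one_mul _).symm)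
      rw [hgC]
      rw [Polynomial.isUnit_C]
      rw [Int.isUnit_iff_natAbs_eq]
      rw [hgC] at hA
      simpa using hA
    · rcases Nat.eq_zero_or_pos h.natDegree with hh1 | hh1
      · right
        have hhC : h = C (h.coeff 0) := Polynomial.eq_C_of_natDegree_eq_zero hh1
        have hgdeg : 1 ≤ g.natDegree := hg1
        have hB := key g hgd hgdeg
        have hA : (h.eval m).natAbs = 1 := by
          have hdvd : (g.eval m).natAbs ∣ (F.eval m).natAbs := ⟨(h.eval m).natAbs, hev.symm⟩
          rcases (hp.eq_one_or_self_of_dvd _ hdvd) with h1 | h1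
          · omega
          · rw [h1] at hev
            have : 0 < (F.eval m).natAbs := by omega
            exact Nat.eq_of_mul_eq_mul_left this (hev.trans (mul_one _).symm)
        rw [hhC, Polynomial.isUnit_C, Int.isUnit_iff_natAbs_eq]
        rw [hhC] at hA
        simpa using hA
      · exfalso
        have hAg := key g hgd hg1
        have hBh := key h hhd hh1
        have hdvd : (g.eval m).natAbs ∣ (F.eval m).natAbs := ⟨(h.eval m).natAbs, hev.symm⟩
        rcases hp.eq_one_or_self_of_dvd _ hdvd with h1 | h1
        · omega
        · rw [h1] at hev
          have hpos : 0 < (F.eval m).natAbs := by omega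
          have : (h.eval m).natAbs = 1 := Nat.eq_of_mul_eq_mul_left hpos (hev.trans (mul_one _).symm)
          omega
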